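/- arXiv:2105.03694 — 3 statements merged into one kernel-verified Lean document; each statement's English description precedes it below -/
import Mathlib

section
/- For any tree T of order at least 3, the Connected-compelling chromatic number of T equals 1 plus the number of interior (non-leaf) vertices of T. -/
open SimpleGraph

/-- A proper coloring of `G` with `k` colors. -/
def ProperColoring {V : Type*} {k : ℕ} (G : SimpleGraph V) (c : V → Fin k) : Prop :=
  ∀ ⦃u v : V⦄, G.Adj u v → c u ≠ c v

/-- `f` selects a rainbow committee of the coloring `c`: one vertex of each color. -/
def IsRainbow {V : Type*} {k : ℕ} (c : V → Fin k) (f : Fin k → V) : Prop :=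
  ∀ i : Fin k, c (f i) = i

/-- The coloring `c` compels property `P`: every rainbow committee has property `P`. -/
def Compels {V : Type*} {k : ℕ} (c : V → Fin k) (P : Set V → Prop) : Prop :=
  ∀ f : Fin k → V, IsRainbow c f → P (Set.range f)

/-- The `P`-compelling chromatic number of `G`: the least number of colors in a proper
coloring, using every color, in which every rainbow committee has property `P`. -/
noncomputable def compellingChromNum {V : Type*} (G : SimpleGraph V) (P : Set V → Prop) : ℕ :=
  sInf {k : ℕ | ∃ c : V → Fin k,
    ProperColoring G c ∧ Function.Surjective c ∧ Compels c P}

/-- Property `Connected`: the set induces a connected subgraph of `G`. -/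
def InducesConnected {V : Type*} (G : SimpleGraph V) (S : Set V) : Prop :=
  (G.induce S).Connected

/-- The Connected-compelling chromatic number. -/
noncomputable def connCompellingChromNum {V : Type*} (G : SimpleGraph V) : ℕ :=
  compellingChromNum G (InducesConnected G)

section Aux

variable {V : Type*} {G : SimpleGraph V}

private lemma reachable_induce {S : Set V} {a b : V} (p : G.Walk a b)
    (hs : ∀ x ∈ p.support, x ∈ S) (ha : a ∈ S) (hb : b ∈ S) :
    (G.induce S).Reachable ⟨a, ha⟩ ⟨b, hb⟩ := by
  induction p with
  | nil => exact Reachable.refl _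
  | @cons u x c h q ih =>
    have hx : x ∈ S := hs x (by simp)
    refine Reachable.trans (Adj.reachable ?_) (ih (fun y hy => hs y (by simp [hy])) hx hb)
    exact h

private lemma walk_out_of_induce {S : Set V} {a b : ↥S} (p : (G.induce S).Walk a b) :
    ∃ q : G.Walk a.1 b.1, ∀ x ∈ q.support, x ∈ S := by
  refine ⟨p.map ⟨Subtype.val, fun h => h⟩, ?_⟩
  intro x hx
  rw [Walk.support_map, List.mem_map] at hx
  obtain ⟨y, -, rfl⟩ := hx
  exact y.2

private lemma degree_pos' [Fintype V] [DecidableRel G.Adj] (hc : G.Connected)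
    (h2 : 2 ≤ Fintype.card V) (v : V) : 0 < G.degree v := by
  obtain ⟨u, hu⟩ := Fintype.exists_ne_of_one_lt_card (by omega) v
  obtain ⟨p⟩ := hc.preconnected v u
  cases p with
  | nil => exact absurd rfl hu.symm
  | cons h q => exact G.degree_pos_iff_exists_adj v |>.mpr ⟨_, h⟩

private lemma two_le_degree_of_internal [Fintype V] [DecidableRel G.Adj] {a b w : V}
    (p : G.Walk a b) (hp : p.IsPath) (hw : w ∈ p.support) (hwa : w ≠ a) (hwb : w ≠ b) :
    2 ≤ G.degree w := by
  induction p with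
  | nil => simp at hw; exact absurd hw hwa
  | @cons u x c h q ih =>
    rw [Walk.support_cons, List.mem_cons] at hw
    rcases hw with rfl | hw
    · exact absurd rfl hwa
    rcases eq_or_ne w x with rfl | hwx
    · have hq : ¬ q.Nil := Walk.not_nil_of_ne hwb
      have h2 : G.Adj w (q.getVert 1) := Walk.adj_snd hq
      have hne : u ≠ q.getVert 1 := by
        intro he
        have hmem : q.getVert 1 ∈ q.support :=
          Walk.mem_support_iff_exists_getVert.mpr ⟨1, rfl, by
            rw [Walk.not_nil_iff_lt_length] at hq; omega⟩
        rw [← he] at hmem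
        exact ((Walk.cons_isPath_iff h q).mp hp).2 hmem
      rw [← card_neighborFinset_eq_degree]
      exact Finset.one_lt_card.mpr ⟨u, by simpa using h.symm, q.getVert 1, by simpa using h2, hne⟩
    · exact ih hp.of_cons hw hwx hwb

private lemma unique_nbr_of_degree_one [Fintype V] [DecidableRel G.Adj] {u v : V}
    (hu : G.degree u = 1) (huv : G.Adj u v) : ∀ x, G.Adj u x → x = v := by
  intro x hx
  obtain ⟨a, ha⟩ := Finset.card_eq_one.mp (hu : (G.neighborFinset u).card = 1)
  have h1 : v ∈ G.neighborFinset u := by simpa using huv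
  have h2 : x ∈ G.neighborFinset u := by simpa using hx
  rw [ha, Finset.mem_singleton] at h1 h2
  rw [h1, h2]

private lemma eq_of_adj_leaves [Fintype V] [DecidableRel G.Adj] (hc : G.Connected) {u v : V}
    (huv : G.Adj u v) (hu : G.degree u = 1) (hv : G.degree v = 1) (w : V) : w = u ∨ w = v := by
  have hnu := unique_nbr_of_degree_one hu huv
  have hnv := unique_nbr_of_degree_one hv huv.symm
  have key : ∀ {a x : V} (p : G.Walk a x), (a = u ∨ a = v) → (x = u ∨ x = v) := by
    intro a x p
    induction p with
    | nil => exact id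
    | @cons a y x h q ih =>
      intro ha
      apply ih
      rcases ha with rfl | rfl
      · exact Or.inr (hnu y h)
      · exact Or.inl (hnv y h)
  obtain ⟨p⟩ := hc.preconnected u w
  exact key p (Or.inl rfl)

private lemma exists_sep_neighbor [Fintype V] [DecidableRel G.Adj] (hT : G.IsTree) {v w : V}
    (hv : 2 ≤ G.degree v) (hw : w ≠ v) :
    ∃ y, G.Adj v y ∧ ∀ (q : G.Walk y w), v ∈ q.support := by
  classical
  obtain ⟨p0⟩ := hT.1.preconnected v w
  set pr : G.Walk v w := (p0.toPath : G.Walk v w) with hpr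
  have hprp : pr.IsPath := p0.toPath.2
  have hnn : ¬ pr.Nil := Walk.not_nil_of_ne (Ne.symm hw)
  set z : V := pr.getVert 1 with hz
  have hadjz : G.Adj v z := Walk.adj_snd hnn
  have hzmem : z ∈ G.neighborFinset v := by simpa using hadjz
  obtain ⟨y, hy, hyz⟩ := Finset.exists_mem_ne
    (s := G.neighborFinset v) (by omega : 1 < G.degree v) z
  have hadjy : G.Adj v y := by simpa using hy
  refine ⟨y, hadjy, fun q => ?_⟩
  by_contra hvq
  have hq' : (q.toPath : G.Walk y w).IsPath := q.toPath.2
  have hvq' : v ∉ (q.toPath : G.Walk y w).support := fun h => hvq (q.support_toPath_subset h)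
  have hpath : (Walk.cons hadjy (q.toPath : G.Walk y w)).IsPath := hq'.cons hvq'
  have heq2 := hT.2.path_unique ⟨Walk.cons hadjy (q.toPath : G.Walk y w), hpath⟩ ⟨pr, hprp⟩
  have heq : Walk.cons hadjy (q.toPath : G.Walk y w) = pr := congrArg Subtype.val heq2
  apply hyz
  rw [hz, ← heq, Walk.getVert_cons_succ, Walk.getVert_zero]

private lemma tree_sum_deg [Fintype V] [DecidableRel G.Adj] (hT : G.IsTree) :
    ∑ v, G.degree v = 2 * (Fintype.card V - 1) := by
  have h1 := G.sum_degrees_eq_twice_card_edges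
  have h2 := hT.card_edgeFinset
  omega

private lemma exists_leaf [Fintype V] [DecidableRel G.Adj] (hT : G.IsTree)
    (h3 : 3 ≤ Fintype.card V) : ∃ v, G.degree v = 1 := by
  by_contra h
  push_neg at h
  have h2 : ∀ v, 2 ≤ G.degree v := fun v => by
    have := degree_pos' hT.1 (by omega) v
    have := h v
    omega
  have hle : ∑ v : V, 2 ≤ ∑ v, G.degree v := Finset.sum_le_sum (fun v _ => h2 v)
  rw [tree_sum_deg hT] at hle
  simp [Finset.sum_const, Finset.card_univ] at hle
  omega

private lemma exists_interior [Fintype V] [DecidableRel G.Adj] (hT : G.IsTree)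
    (h3 : 3 ≤ Fintype.card V) : ∃ v, G.degree v ≠ 1 := by
  by_contra h
  push_neg at h
  have heq : ∑ v, G.degree v = ∑ v : V, 1 := Finset.sum_congr rfl (fun v _ => h v)
  rw [tree_sum_deg hT] at heq
  simp [Finset.card_univ] at heq
  omega

end Aux

/-- For a tree of order at least 3, the Connected-compelling chromatic number equals one
plus the number of interior (non-leaf) vertices. -/
theorem connCompellingChromNum_tree {V : Type*} [Fintype V] (T : SimpleGraph V)
    [DecidableRel T.Adj] (hT : T.IsTree) (hcard : 3 ≤ Fintype.card V) :
    connCompellingChromNum T = 1 + {v : V | T.degree v ≠ 1}.ncard := by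
  classical
  set Int : Set V := {v : V | T.degree v ≠ 1} with hInt
  set n : ℕ := Int.ncard with hn
  have hfin : Int.Finite := Set.toFinite _
  have hcardInt : Fintype.card ↥Int = n := by
    rw [hn, Set.ncard_eq_toFinset_card', Set.toFinset_card]
  -- an equivalence enumerating interior vertices
  let e : ↥Int ≃ Fin n := (Fintype.equivFin ↥Int).trans (finCongr hcardInt)
  -- the upper-bound coloring
  let c₀ : V → Fin (1 + n) := fun v =>
    if h : T.degree v ≠ 1 then ⟨(e ⟨v, h⟩).1 + 1, by have := (e ⟨v, h⟩).2; omega⟩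
    else ⟨0, by omega⟩
  obtain ⟨ℓ, hℓ⟩ := exists_leaf hT hcard
  obtain ⟨v₀, hv₀⟩ := exists_interior hT hcard
  have hc₀int : ∀ v (h : T.degree v ≠ 1), c₀ v = ⟨(e ⟨v, h⟩).1 + 1, by have := (e ⟨v, h⟩).2; omega⟩ :=
    fun v h => by simp only [c₀, dif_pos h]
  have hc₀leaf : ∀ v, T.degree v = 1 → c₀ v = ⟨0, by omega⟩ := fun v h => by
    simp only [c₀, dif_neg (not_not_intro h)]
  -- properness of c₀
  have hproper : ProperColoring T c₀ := by
    intro u v huv heq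
    by_cases hu : T.degree u ≠ 1 <;> by_cases hv : T.degree v ≠ 1
    · rw [hc₀int u hu, hc₀int v hv, Fin.mk.injEq] at heq
      have : (⟨u, hu⟩ : ↥Int) = ⟨v, hv⟩ := e.injective (Fin.ext (by omega))
      exact huv.ne (congrArg Subtype.val this)
    · push_neg at hv
      rw [hc₀int u hu, hc₀leaf v hv, Fin.mk.injEq] at heq
      omega
    · push_neg at hu
      rw [hc₀leaf u hu, hc₀int v hv, Fin.mk.injEq] at heq
      omega
    · push_neg at hu hv
      have hall := eq_of_adj_leaves hT.1 huv hu hv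
      have hsub : (Finset.univ : Finset V) ⊆ {u, v} := by
        intro w _
        rcases hall w with rfl | rfl <;> simp
      have := Finset.card_le_card hsub
      rw [Finset.card_univ] at this
      have h2 : ({u, v} : Finset V).card ≤ 2 := Finset.card_insert_le _ _ |>.trans (by simp)
      omega
  -- surjectivity of c₀
  have hsurj : Function.Surjective c₀ := by
    intro i
    rcases Nat.eq_zero_or_pos i.1 with hi | hi
    · exact ⟨ℓ, by rw [hc₀leaf ℓ hℓ]; exact Fin.ext (by simp [hi])⟩
    · set j : Fin n := ⟨i.1 - 1, by have := i.2; omega⟩ with hj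
      refine ⟨(e.symm j).1, ?_⟩
      have hmem : T.degree (e.symm j).1 ≠ 1 := (e.symm j).2
      rw [hc₀int _ hmem]
      have h3 : e ⟨(e.symm j).1, hmem⟩ = j := by
        rw [show (⟨(e.symm j).1, hmem⟩ : ↥Int) = e.symm j from Subtype.ext rfl,
          Equiv.apply_symm_apply]
      refine Fin.ext ?_
      simp only [h3]
      simp only [hj]
      have := i.2
      omega
  -- every interior vertex belongs to every rainbow committee of c₀
  have hintmem : ∀ (f : Fin (1 + n) → V), IsRainbow c₀ f →
      ∀ w, T.degree w ≠ 1 → w ∈ Set.range f := by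
    intro f hf w hw
    set i : Fin (1 + n) := c₀ w with hi
    refine ⟨i, ?_⟩
    have hfi : c₀ (f i) = i := hf i
    have hival : i.1 = (e ⟨w, hw⟩).1 + 1 := by rw [hi, hc₀int w hw]
    by_cases hfw : T.degree (f i) ≠ 1
    · rw [hc₀int _ hfw] at hfi
      have hval := congrArg Fin.val hfi
      simp only at hval
      have : (⟨f i, hfw⟩ : ↥Int) = ⟨w, hw⟩ := e.injective (Fin.ext (by omega))
      exact congrArg Subtype.val this
    · push_neg at hfw
      rw [hc₀leaf _ hfw] at hfi
      have hval := congrArg Fin.val hfi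
      simp only at hval
      omega
  -- c₀ compels connectedness
  have hcompel : Compels c₀ (InducesConnected T) := by
    intro f hf
    rw [InducesConnected, SimpleGraph.connected_iff]
    constructor
    · intro a b
      obtain ⟨a, ha⟩ := a
      obtain ⟨b, hb⟩ := b
      obtain ⟨p0⟩ := hT.1.preconnected a b
      set p : T.Walk a b := (p0.toPath : T.Walk a b) with hp
      have hpp : p.IsPath := p0.toPath.2
      have hsupp : ∀ x ∈ p.support, x ∈ Set.range f := by
        intro x hx
        rcases eq_or_ne x a with rfl | hxa
        · exact ha
        rcases eq_or_ne x b with rfl | hxb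
        · exact hb
        have h2 : 2 ≤ T.degree x := two_le_degree_of_internal p hpp hx hxa hxb
        exact hintmem f hf x (by omega)
      exact reachable_induce p hsupp ha hb
    · exact ⟨⟨f ⟨0, by omega⟩, ⟨⟨0, by omega⟩, rfl⟩⟩⟩
  -- membership: 1 + n is an admissible number of colors
  have hmem : (1 + n) ∈ {k : ℕ | ∃ c : V → Fin k,
      ProperColoring T c ∧ Function.Surjective c ∧ Compels c (InducesConnected T)} :=
    ⟨c₀, hproper, hsurj, hcompel⟩
  -- lower bound
  have hlow : ∀ k ∈ {k : ℕ | ∃ c : V → Fin k,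
      ProperColoring T c ∧ Function.Surjective c ∧ Compels c (InducesConnected T)},
      1 + n ≤ k := by
    rintro k ⟨c, hcp, hcs, hcc⟩
    -- no vertex shares a color with a distinct interior vertex
    have key : ∀ v w : V, T.degree v ≠ 1 → w ≠ v → c w ≠ c v := by
      intro v w hv hw hcwv
      have hv2 : 2 ≤ T.degree v := by
        have := degree_pos' hT.1 (by omega) v
        omega
      obtain ⟨y, hady, hsep⟩ := exists_sep_neighbor hT hv2 hw
      have hcy : c y ≠ c v := fun h => hcp hady (by rw [h])
      set f : Fin k → V := fun j =>
        if j = c v then w else if j = c y then y else (hcs j).choose with hfdef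
      have hrain : IsRainbow c f := by
        intro j
        by_cases h1 : j = c v
        · simp only [f, if_pos h1]; rw [hcwv, h1]
        · by_cases h2 : j = c y
          · simp only [f, if_neg h1, if_pos h2]; rw [h2]
          · simp only [f, if_neg h1, if_neg h2]; exact (hcs j).choose_spec
      have hvnot : v ∉ Set.range f := by
        rintro ⟨j, hj⟩
        by_cases h1 : j = c v
        · rw [hfdef] at hj; simp only [if_pos h1] at hj; exact hw hj
        · by_cases h2 : j = c y
          · rw [hfdef] at hj; simp only [if_neg h1, if_pos h2] at hj
            exact hady.ne' hj
          · rw [hfdef] at hj; simp only [if_neg h1, if_neg h2] at hj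
            apply h1
            rw [← (hcs j).choose_spec, hj]
      have hymem : y ∈ Set.range f := by
        refine ⟨c y, ?_⟩
        rw [hfdef]; simp [if_neg hcy]
      have hwmem : w ∈ Set.range f := by
        refine ⟨c v, ?_⟩
        rw [hfdef]; simp
      have hconn := hcc f hrain
      rw [InducesConnected] at hconn
      obtain ⟨q0⟩ := hconn.preconnected ⟨y, hymem⟩ ⟨w, hwmem⟩
      obtain ⟨q, hq⟩ := walk_out_of_induce q0
      exact hvnot (hq v (hsep q))
    -- c is injective on (insert ℓ Int)
    have hinj : Set.InjOn c (insert ℓ Int) := by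
      intro a ha b hb hab
      by_contra hne
      rcases Set.mem_insert_iff.mp ha with rfl | hain
      · rcases Set.mem_insert_iff.mp hb with rfl | hbin
        · exact hne rfl
        · exact key b a hbin hne hab
      · exact key a b hain (Ne.symm hne) hab.symm
    have hℓnot : ℓ ∉ Int := by simp [hInt, hℓ]
    have hcount : (insert ℓ Int).ncard = 1 + n := by
      rw [Set.ncard_insert_of_notMem hℓnot hfin]
      omega
    have himg : (c '' (insert ℓ Int)).ncard = 1 + n := by
      rw [Set.ncard_image_of_injOn hinj, hcount]
    have hle : (c '' (insert ℓ Int)).ncard ≤ k := by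
      have h1 : (c '' (insert ℓ Int)).ncard ≤ (Set.univ : Set (Fin k)).ncard :=
        Set.ncard_le_ncard (Set.subset_univ _) Set.finite_univ
      rw [Set.ncard_univ, Nat.card_eq_fintype_card, Fintype.card_fin] at h1
      exact h1
    omega
  rw [connCompellingChromNum, compellingChromNum]
  exact le_antisymm (Nat.sInf_le hmem) (le_csInf ⟨_, hmem⟩ hlow)
end

section
/- A connected graph G on n ≥ 2 vertices has Connected-compelling chromatic number equal to n if and only if G is complete. -/
open SimpleGraph

/-- Deleting an endpoint of a maximum-distance pair keeps the graph connected. -/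
lemma induce_compl_connected_of_max_dist {V : Type*} (G : SimpleGraph V)
    (hconn : G.Connected) {u v : V} (hne : u ≠ v)
    (hmax : ∀ x y : V, G.dist x y ≤ G.dist u v) :
    (G.induce {u}ᶜ).Connected := by
  classical
  apply G.induce_connected_of_patches v (by simpa using hne.symm)
  intro w hw
  have hwu : w ≠ u := by simpa using hw
  obtain ⟨p, hp⟩ := hconn.exists_walk_length_eq_dist v w
  have husup : u ∉ p.support := by
    intro hu
    have hsplit := p.take_spec hu
    have hlen : (p.takeUntil u hu).length + (p.dropUntil u hu).length = p.length := by
      conv_rhs => rw [← hsplit]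
      rw [SimpleGraph.Walk.length_append]
    have h1 : G.dist v u ≤ (p.takeUntil u hu).length := G.dist_le _
    have h2 : G.dist u w ≤ (p.dropUntil u hu).length := G.dist_le _
    have h3 : 1 ≤ G.dist u w := hconn.pos_dist_of_ne hwu.symm
    have h4 : G.dist v w ≤ G.dist u v := hmax v w
    have h5 : G.dist v u = G.dist u v := G.dist_comm
    omega
  refine ⟨{x | x ∈ p.support}, ?_, p.start_mem_support, p.end_mem_support, ?_⟩
  · intro x hx
    simp only [Set.mem_compl_iff, Set.mem_singleton_iff]
    rintro rfl; exact husup hx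
  · exact p.connected_induce_support.preconnected _ _

/-- A connected graph on `n ≥ 2` vertices has Connected-compelling chromatic number `n`
iff it is complete. -/
theorem connCompellingChromNum_eq_card_iff {V : Type*} [Fintype V] (G : SimpleGraph V)
    (hconn : G.Connected) (hcard : 2 ≤ Fintype.card V) :
    connCompellingChromNum G = Fintype.card V ↔ G = ⊤ := by
  classical
  set n := Fintype.card V with hn
  have hVne : Nonempty V := Fintype.card_pos_iff.mp (by omega)
  constructor
  · -- contrapositive: if G ≠ ⊤ then the number is < n
    intro hnum
    by_contra hG
    -- find a nonadjacent pair
    obtain ⟨a, b, hab, hadj⟩ : ∃ a b : V, a ≠ b ∧ ¬ G.Adj a b := by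
      by_contra h
      push_neg at h
      apply hG
      ext x y
      simp only [top_adj]
      exact ⟨G.ne_of_adj, fun hxy => h x y hxy⟩
    -- a max-distance pair
    obtain ⟨⟨u, v⟩, hmaxp⟩ := Finite.exists_max (fun p : V × V => G.dist p.1 p.2)
    have hmax : ∀ x y : V, G.dist x y ≤ G.dist u v := fun x y => hmaxp (x, y)
    have hab2 : 2 ≤ G.dist a b := by
      have h1 : 1 ≤ G.dist a b := hconn.pos_dist_of_ne hab
      have : G.dist a b ≠ 1 := fun h => hadj (dist_eq_one_iff_adj.mp h)
      omega
    have huv2 : 2 ≤ G.dist u v := le_trans hab2 (hmax a b)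
    have hne : u ≠ v := by
      rintro rfl
      simp [G.dist_self] at huv2
    have hGu : (G.induce {u}ᶜ).Connected :=
      induce_compl_connected_of_max_dist G hconn hne hmax
    have hGv : (G.induce {v}ᶜ).Connected := by
      refine induce_compl_connected_of_max_dist G hconn hne.symm ?_
      intro x y
      rw [G.dist_comm (u := v)]
      exact hmax x y
    have hadjuv : ¬ G.Adj u v := by
      intro h
      have := dist_eq_one_iff_adj.mpr h
      omega
    -- the coloring with n - 1 colors
    have hcardsub : Fintype.card {w : V // w ≠ v} = n - 1 := by
      have := Fintype.card_subtype_compl (fun w : V => w = v)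
      simpa [Fintype.card_subtype_eq, hn] using this
    let e : {w : V // w ≠ v} ≃ Fin (n - 1) := Fintype.equivFinOfCardEq hcardsub
    let c : V → Fin (n - 1) := fun w => if h : w = v then e ⟨u, hne⟩ else e ⟨w, h⟩
    have hcu : c u = e ⟨u, hne⟩ := dif_neg hne
    have hcv : c v = e ⟨u, hne⟩ := dif_pos rfl
    have hcne : ∀ (w : V) (h : w ≠ v), c w = e ⟨w, h⟩ := fun w h => dif_neg h
    have hinj : ∀ w w', w ≠ v → w' ≠ v → c w = c w' → w = w' := by
      intro w w' hw hw' h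
      rw [hcne w hw, hcne w' hw'] at h
      simpa using e.injective h
    have hmem : (n - 1) ∈ {k : ℕ | ∃ c : V → Fin k,
        ProperColoring G c ∧ Function.Surjective c ∧ Compels c (InducesConnected G)} := by
      refine ⟨c, ?_, ?_, ?_⟩
      · -- proper
        intro x y hxy h
        have hxyne : x ≠ y := G.ne_of_adj hxy
        by_cases hx : x = v
        · have hyv : y ≠ v := fun hy => hxyne (hx.trans hy.symm)
          have hyu : y = u := hinj y u hyv hne (by rw [← h, hx, hcv, hcu])
          exact hadjuv (by rw [← hx, ← hyu]; exact hxy.symm)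
        · by_cases hy : y = v
          · have hxu' : x = u := hinj x u hx hne (by rw [h, hy, hcv, hcu])
            exact hadjuv (by rw [← hy, ← hxu']; exact hxy)
          · exact hxyne (hinj x y hx hy h)
      · -- surjective
        intro i
        obtain ⟨w, hw⟩ := e.surjective i
        exact ⟨w.1, by rw [hcne w.1 w.2, Subtype.coe_eta, hw]⟩
      · -- compels
        intro f hf
        have hcvu : c v = c u := by rw [hcv, hcu]
        by_cases hx : f (c u) = v
        · -- range f = {u}ᶜ
          have hrange : Set.range f = {u}ᶜ := by
            ext w
            simp only [Set.mem_range, Set.mem_compl_iff, Set.mem_singleton_iff]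
            constructor
            · rintro ⟨i, rfl⟩ hfi
              have hi : c (f i) = i := hf i
              have h2 : c u = i := by rw [← hi, hfi]
              have h3 : f (c u) = u := by rw [h2, hfi]
              exact hne (hx.symm.trans h3).symm
            · intro hw
              by_cases hwv : w = v
              · exact ⟨c u, by rw [hx, hwv]⟩
              · refine ⟨c w, ?_⟩
                have h1 : c (f (c w)) = c w := hf (c w)
                have hfw : f (c w) ≠ v := by
                  intro hfv
                  have h2 : c w = c u := by rw [← h1, hfv, hcvu]
                  have h3 : w = u := hinj w u hwv hne h2
                  exact hw h3
                exact hinj _ w hfw hwv h1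
          rw [InducesConnected, hrange]
          exact hGu
        · have hxu : f (c u) = u := by
            have h1 : c (f (c u)) = c u := hf (c u)
            exact hinj _ u hx hne (by rw [h1])
          have hrange : Set.range f = {v}ᶜ := by
            ext w
            simp only [Set.mem_range, Set.mem_compl_iff, Set.mem_singleton_iff]
            constructor
            · rintro ⟨i, rfl⟩ hfi
              have hi : c (f i) = i := hf i
              have h2 : c u = i := by rw [← hi, hfi, hcvu]
              have h3 : f (c u) = v := by rw [h2, hfi]
              exact hne (h3.symm.trans hxu).symm
            · intro hw
              refine ⟨c w, ?_⟩
              have h1 : c (f (c w)) = c w := hf (c w)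
              have hfw : f (c w) ≠ v := by
                intro hfv
                have h2 : c w = c u := by rw [← h1, hfv, hcvu]
                rw [h2, hxu] at hfv
                exact hne hfv
              exact hinj _ w hfw hw h1
          rw [InducesConnected, hrange]
          exact hGv
    have hle : connCompellingChromNum G ≤ n - 1 := Nat.sInf_le hmem
    omega
  · -- G = ⊤
    rintro rfl
    have hmemn : n ∈ {k : ℕ | ∃ c : V → Fin k,
        ProperColoring (⊤ : SimpleGraph V) c ∧ Function.Surjective c ∧
          Compels c (InducesConnected (⊤ : SimpleGraph V))} := by
      let e : V ≃ Fin n := Fintype.equivFinOfCardEq rfl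
      refine ⟨e, ?_, e.surjective, ?_⟩
      · intro x y hxy h
        exact hxy.ne (e.injective h)
      · intro f hf
        rw [InducesConnected, connected_iff_exists_forall_reachable]
        refine ⟨⟨f ⟨0, by omega⟩, Set.mem_range_self _⟩, ?_⟩
        intro y
        by_cases hxy : (⟨f ⟨0, by omega⟩, Set.mem_range_self _⟩ :
            (Set.range f : Set V)) = y
        · rw [hxy]
        · refine Adj.reachable ?_
          simp only [comap_adj, Function.Embedding.coe_subtype, top_adj]
          exact fun h => hxy (Subtype.ext h)
    have hub : ∀ k ∈ {k : ℕ | ∃ c : V → Fin k,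
        ProperColoring (⊤ : SimpleGraph V) c ∧ Function.Surjective c ∧
          Compels c (InducesConnected (⊤ : SimpleGraph V))}, k = n := by
      rintro k ⟨c, hp, hs, -⟩
      have hinj : Function.Injective c := by
        intro x y h
        by_contra hxy
        exact hp ((top_adj x y).mpr hxy) h
      have := Fintype.card_of_bijective ⟨hinj, hs⟩
      simp [hn] at this ⊢
      omega
    have hmm := Nat.sInf_mem ⟨n, hmemn⟩
    exact hub _ hmm
end

section
/- If D is a connected dominating set of an outerplanar graph G, then the graph G − D (the induced subgraph on V(G) \ D) contains no cycle, i.e., is a forest. -/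
open SimpleGraph

/-- `H` is a minor of `G`, witnessed by pairwise-disjoint nonempty connected branch sets,
one for each vertex of `H`, with adjacent vertices of `H` having branch sets joined by an
edge of `G`. -/
def HasMinor {α V : Type*} (G : SimpleGraph V) (H : SimpleGraph α) : Prop :=
  ∃ S : α → Set V,
    (∀ a, (S a).Nonempty) ∧
    (∀ a, (G.induce (S a)).Connected) ∧
    (Pairwise fun a b => Disjoint (S a) (S b)) ∧
    ∀ a b, H.Adj a b → ∃ u ∈ S a, ∃ v ∈ S b, G.Adj u v

/-- A graph is outerplanar iff it has no `K₄` minor and no `K_{2,3}` minor. -/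
def Outerplanar {V : Type*} (G : SimpleGraph V) : Prop :=
  ¬HasMinor G (completeGraph (Fin 4)) ∧
    ¬HasMinor G (completeBipartiteGraph (Fin 2) (Fin 3))

/-- `S` is a connected dominating set of `G`. -/
def IsCDS {V : Type*} (G : SimpleGraph V) (S : Set V) : Prop :=
  (G.induce S).Connected ∧ ∀ v ∉ S, ∃ u ∈ S, G.Adj u v

lemma induce_singleton_connected {V : Type*} (G : SimpleGraph V) (v : V) :
    (G.induce {v}).Connected := by
  have h : ({w | w ∈ (Walk.nil : G.Walk v v).support} : Set V) = {v} := by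
    ext x; simp
  have := (Walk.nil : G.Walk v v).connected_induce_support
  rwa [h] at this

set_option maxHeartbeats 1000000 in
/-- Removing a connected dominating set from an outerplanar graph leaves a forest. -/
theorem isAcyclic_of_removing_cds {V : Type*} [Fintype V] (G : SimpleGraph V)
    (hG : Outerplanar G) (D : Set V) (hD : IsCDS G D) :
    (G.induce Dᶜ).IsAcyclic := by
  intro v₀ c₀ hc₀
  -- transfer the cycle to `G`
  set f : G.induce Dᶜ ↪g G := SimpleGraph.Embedding.induce Dᶜ with hf
  have hc' : (c₀.map f.toHom).IsCycle :=
    (Walk.map_isCycle_iff_of_injective f.injective).mpr hc₀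
  have hsupp : ∀ x ∈ (c₀.map f.toHom).support, x ∉ D := by
    intro x hx
    rw [Walk.support_map] at hx
    obtain ⟨y, -, rfl⟩ := List.mem_map.mp hx
    exact y.2
  revert hc' hsupp
  generalize c₀.map f.toHom = c
  intro hc' hsupp
  -- destructure the cycle
  match c, hc' with
  | Walk.cons (v := u1) h p, hc' =>
  have hp : p.IsPath := ((Walk.cons_isCycle_iff p h).mp hc').1
  have hlen : 2 ≤ p.length := by
    have := hc'.three_le_length
    simp only [Walk.length_cons] at this
    omega
  match p, hp, hlen, h with
  | Walk.cons (v := u2) h2 q, hp, hlen, h =>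
  match q, hp, h2 with
  | Walk.cons h3 q', hp, h2 =>
  obtain ⟨w, r, h4, hq⟩ := Walk.exists_cons_eq_concat h3 q'
  rw [hq] at hp hsupp
  -- extract nodup facts
  have hnodup := hp.support_nodup
  rw [Walk.support_cons, Walk.support_concat] at hnodup
  simp only [List.concat_eq_append, List.nodup_cons, List.nodup_append, List.mem_append,
    List.mem_singleton, List.nodup_singleton, List.disjoint_singleton] at hnodup
  have hu1r : u1 ∉ r.support := fun hmem => hnodup.1 (Or.inl hmem)
  have hu1v : u1 ≠ (f v₀ : V) := fun hmem => hnodup.1 (Or.inr hmem)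
  have hvr : (f v₀ : V) ∉ r.support := fun hmem => hnodup.2.2.2 _ hmem _ rfl rfl
  -- memberships outside D
  have hsupp' : ∀ x, (x = f v₀ ∨ x = u1 ∨ x ∈ r.support) → x ∉ D := by
    intro x hx
    apply hsupp
    rw [Walk.support_cons, Walk.support_cons, Walk.support_concat]
    simp only [List.concat_eq_append, List.mem_cons, List.mem_append, List.mem_singleton]
    tauto
  have hvD : (f v₀ : V) ∉ D := hsupp' _ (Or.inl rfl)
  have hu1D : u1 ∉ D := hsupp' _ (Or.inr (Or.inl rfl))
  have hu2D : u2 ∉ D := hsupp' _ (Or.inr (Or.inr r.start_mem_support))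
  -- dominating vertices
  obtain ⟨d0, hd0D, hd0⟩ := hD.2 _ hvD
  obtain ⟨d1, hd1D, hd1⟩ := hD.2 _ hu1D
  obtain ⟨d2, hd2D, hd2⟩ := hD.2 _ hu2D
  -- build the K₄ minor
  refine hG.1 ⟨![{(f v₀ : V)}, {u1}, {x | x ∈ r.support}, D], ?_, ?_, ?_, ?_⟩
  · intro a
    fin_cases a
    · exact ⟨_, rfl⟩
    · exact ⟨_, rfl⟩
    · exact ⟨u2, r.start_mem_support⟩
    · exact ⟨d0, hd0D⟩
  · intro a
    fin_cases a
    · exact induce_singleton_connected G _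
    · exact induce_singleton_connected G _
    · exact r.connected_induce_support
    · exact hD.1
  · have d01 : Disjoint ({(f v₀ : V)} : Set V) {u1} :=
      Set.disjoint_singleton_left.mpr fun hx => hu1v (Set.mem_singleton_iff.mp hx).symm
    have d02 : Disjoint ({(f v₀ : V)} : Set V) {x | x ∈ r.support} :=
      Set.disjoint_singleton_left.mpr hvr
    have d03 : Disjoint ({(f v₀ : V)} : Set V) D :=
      Set.disjoint_singleton_left.mpr hvD
    have d12 : Disjoint ({u1} : Set V) {x | x ∈ r.support} :=
      Set.disjoint_singleton_left.mpr hu1r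
    have d13 : Disjoint ({u1} : Set V) D :=
      Set.disjoint_singleton_left.mpr hu1D
    have d23 : Disjoint ({x | x ∈ r.support} : Set V) D :=
      Set.disjoint_left.mpr fun x hx => hsupp' x (Or.inr (Or.inr hx))
    intro a b hab
    fin_cases a <;> fin_cases b <;>
      first
        | exact absurd rfl hab
        | exact d01 | exact d01.symm | exact d02 | exact d02.symm
        | exact d03 | exact d03.symm | exact d12 | exact d12.symm
        | exact d13 | exact d13.symm | exact d23 | exact d23.symm
  · intro a b hab
    fin_cases a <;> fin_cases b <;> simp only [completeGraph_eq_top, top_adj] at hab <;>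
      try exact absurd rfl hab
    · exact ⟨_, rfl, u1, rfl, h⟩
    · exact ⟨_, rfl, w, r.end_mem_support, h4.symm⟩
    · exact ⟨_, rfl, d0, hd0D, hd0.symm⟩
    · exact ⟨u1, rfl, _, rfl, h.symm⟩
    · exact ⟨u1, rfl, u2, r.start_mem_support, h2⟩
    · exact ⟨u1, rfl, d1, hd1D, hd1.symm⟩
    · exact ⟨w, r.end_mem_support, _, rfl, h4⟩
    · exact ⟨u2, r.start_mem_support, u1, rfl, h2.symm⟩
    · exact ⟨u2, r.start_mem_support, d2, hd2D, hd2.symm⟩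
    · exact ⟨d0, hd0D, _, rfl, hd0⟩
    · exact ⟨d1, hd1D, u1, rfl, hd1⟩
    · exact ⟨d2, hd2D, u2, r.start_mem_support, hd2⟩
end
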